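/- Define the Airy coefficients α : ℕ → ℝ by α(0) = 1, α(1) = 0, α(2) = -1/2, and α(k) = -(α(k-3) + α(k-2))/(k(k-1)) for all k ≥ 3. For k ∈ ℕ let m(k) = ⌊k/6⌋ and D(k) = ∏_{i=0}^{m(k)-1} (k - 6i - 1)(k - 6i - 2), with D(k) = 1 when m(k) = 0. Let a : ℕ → ℕ → ℝ satisfy: (i) a n k = α(k) for every n and every k ≤ 2n + 1; and (ii) |a n k| ≤ 2^{m(k)} / D(k) for all n and k. Define ψ_n : ℝ × ℝ → ℂ by ψ_n(r,t) = e^{it}·∑_{k=0}^∞ (a n k)·r^k and ψ : ℝ × ℝ → ℂ by ψ(r,t) = e^{it}·∑_{k=0}^∞ α(k)·r^k. Then for every R > 0, ψ_n converges to ψ uniformly on the strip [-R, R] × ℝ, i.e., sup{ |ψ_n(r,t) - ψ(r,t)| : |r| ≤ R, t ∈ ℝ } → 0 as n → ∞. -/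

import Mathlib

/-- The majorant denominator of Lemma 4.4: `D k = ∏_{i=0}^{⌊k/6⌋-1} (k-6i-1)(k-6i-2)`,
an empty product (hence `1`) when `⌊k/6⌋ = 0`. -/
noncomputable def vimMajorantDenom (k : ℕ) : ℝ :=
  ∏ i ∈ Finset.range (k / 6), (((k : ℝ) - 6 * (i : ℝ) - 1) * ((k : ℝ) - 6 * (i : ℝ) - 2))

lemma vim_factor_bound {k i : ℕ} (hi : i ∈ Finset.range (k / 6)) :
    ((k / 6 : ℕ) : ℝ) - (i : ℝ) ≤ ((k : ℝ) - 6 * (i : ℝ) - 1) ∧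
    (1 : ℝ) ≤ ((k : ℝ) - 6 * (i : ℝ) - 2) := by
  rw [Finset.mem_range] at hi
  have h1 : i + 1 ≤ k / 6 := hi
  have h2 : 6 * (k / 6) ≤ k := Nat.mul_div_le k 6
  have h3 : 6 * (i + 1) ≤ k := le_trans (Nat.mul_le_mul_left 6 h1) h2
  have h1' : (i : ℝ) + 1 ≤ ((k / 6 : ℕ) : ℝ) := by exact_mod_cast h1
  have h2' : 6 * ((k / 6 : ℕ) : ℝ) ≤ (k : ℝ) := by exact_mod_cast h2
  have h3' : 6 * ((i : ℝ) + 1) ≤ (k : ℝ) := by exact_mod_cast h3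
  constructor <;> nlinarith

lemma vimMajorantDenom_pos (k : ℕ) : 0 < vimMajorantDenom k := by
  apply Finset.prod_pos
  intro i hi
  obtain ⟨h1, h2⟩ := vim_factor_bound hi
  rw [Finset.mem_range] at hi
  have : (i : ℝ) ≤ ((k / 6 : ℕ) : ℝ) - 1 := by
    have : i + 1 ≤ k / 6 := hi
    have := (Nat.cast_le (α := ℝ)).2 this
    push_cast at this
    linarith
  nlinarith

lemma vim_factorial_le_denom (k : ℕ) :
    (((k / 6).factorial : ℕ) : ℝ) ≤ vimMajorantDenom k := by
  set m := k / 6 with hm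
  have key : (((∏ i ∈ Finset.range m, (m - i) : ℕ) : ℝ)) ≤ vimMajorantDenom k := by
    rw [Nat.cast_prod]
    apply Finset.prod_le_prod
    · intro i _; positivity
    · intro i hi
      obtain ⟨h1, h2⟩ := vim_factor_bound (k := k) (i := i) (by simpa [hm] using hi)
      rw [Finset.mem_range] at hi
      have hcast : ((m - i : ℕ) : ℝ) = (m : ℝ) - (i : ℝ) := by
        rw [Nat.cast_sub (le_of_lt hi)]
      rw [hcast]
      have hpos : (0 : ℝ) ≤ (m : ℝ) - (i : ℝ) := by
        have := (Nat.cast_le (α := ℝ)).2 (le_of_lt hi)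
        linarith
      calc (m : ℝ) - (i : ℝ) = ((m : ℝ) - (i : ℝ)) * 1 := by ring
        _ ≤ ((k : ℝ) - 6 * i - 1) * ((k : ℝ) - 6 * i - 2) := by
            apply mul_le_mul h1 h2 (by norm_num) (by linarith)
  have hprod : (∏ i ∈ Finset.range m, (m - i) : ℕ) = m.factorial := by
    have := Finset.prod_range_reflect (fun j => j + 1) m
    rw [Finset.prod_range_add_one_eq_factorial] at this
    rw [← this]
    apply Finset.prod_congr rfl
    intro i hi
    rw [Finset.mem_range] at hi
    omega
  rwa [hprod] at key

lemma vim_summable_aux (x : ℝ) (hx : 0 ≤ x) :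
    Summable (fun k : ℕ => x ^ (k / 6) / ((k / 6).factorial : ℝ)) := by
  have hu : Summable (fun m : ℕ => x ^ m / (m.factorial : ℝ)) :=
    Real.summable_pow_div_factorial x
  have hone : Summable (fun _ : Fin 6 => (1 : ℝ)) := Summable.of_finite
  have h2 : Summable (fun p : ℕ × Fin 6 => (x ^ p.1 / (p.1.factorial : ℝ)) * 1) :=
    hu.mul_of_nonneg hone (fun m => by positivity) (fun _ => zero_le_one)
  have h3 : Summable (fun p : ℕ × Fin 6 => x ^ p.1 / (p.1.factorial : ℝ)) := by
    simpa using h2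
  have h4 := (Nat.divModEquiv 6).summable_iff.2 h3
  exact h4

set_option maxHeartbeats 1000000 in
/-- Theorem 4.5, two-variable form: the VIM iterates
`ψ_n(r,t) = e^{it} ∑ (a n k) r^k` converge to the exact solution
`ψ(r,t) = e^{it} ∑ α k r^k` uniformly on every strip `[-R, R] × ℝ`. -/
theorem vim_iterates_converge_uniformly_on_strip
    (α : ℕ → ℝ) (hα0 : α 0 = 1) (hα1 : α 1 = 0) (hα2 : α 2 = -1/2)
    (hαrec : ∀ k : ℕ, 3 ≤ k → α k = -(α (k - 3) + α (k - 2)) / ((k : ℝ) * ((k : ℝ) - 1)))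
    (a : ℕ → ℕ → ℝ)
    (hairy : ∀ n : ℕ, ∀ k ≤ 2 * n + 1, a n k = α k)
    (hbound : ∀ n k : ℕ, |a n k| ≤ 2 ^ (k / 6) / vimMajorantDenom k)
    (ψn : ℕ → ℝ × ℝ → ℂ)
    (hψn : ∀ n : ℕ, ∀ r t : ℝ,
      ψn n (r, t) = Complex.exp (Complex.I * t) * ((∑' k : ℕ, a n k * r ^ k : ℝ) : ℂ))
    (ψ : ℝ × ℝ → ℂ)
    (hψ : ∀ r t : ℝ,
      ψ (r, t) = Complex.exp (Complex.I * t) * ((∑' k : ℕ, α k * r ^ k : ℝ) : ℂ)) :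
    ∀ R : ℝ, 0 < R →
      TendstoUniformlyOn ψn ψ Filter.atTop (Set.Icc (-R) R ×ˢ (Set.univ : Set ℝ)) := by
  intro R hR
  set C : ℝ := max R 1 with hC
  have hC1 : (1 : ℝ) ≤ C := le_max_right _ _
  have hC0 : (0 : ℝ) < C := lt_of_lt_of_le one_pos hC1
  have hRC : R ≤ C := le_max_left _ _
  -- majorant series
  set g : ℕ → ℝ := fun k => (2 * C ^ 6) ^ (k / 6) * C ^ 5 / ((k / 6).factorial : ℝ) with hg
  have hg_nonneg : ∀ k, 0 ≤ g k := by
    intro k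
    have : (0 : ℝ) < 2 * C ^ 6 := by positivity
    positivity
  have hg_summable : Summable g := by
    have := (vim_summable_aux (2 * C ^ 6) (by positivity)).mul_right (C ^ 5)
    apply Summable.congr this
    intro k
    simp [hg]
    ring
  -- α satisfies the same bound
  have hαbound : ∀ k : ℕ, |α k| ≤ 2 ^ (k / 6) / vimMajorantDenom k := by
    intro k
    have := hairy k k (by omega)
    rw [← this]
    exact hbound k k
  -- key pointwise bound: for |r| ≤ R, the k-th term is ≤ g k / 2
  have hterm : ∀ (b : ℕ → ℝ), (∀ k, |b k| ≤ 2 ^ (k / 6) / vimMajorantDenom k) →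
      ∀ (r : ℝ), |r| ≤ R → ∀ k, |b k * r ^ k| ≤ g k := by
    intro b hb r hr k
    set m := k / 6 with hm
    have hD := vimMajorantDenom_pos k
    have hfac := vim_factorial_le_denom k
    have hfacpos : (0 : ℝ) < ((m.factorial : ℕ) : ℝ) := by
      exact_mod_cast Nat.factorial_pos m
    have h1 : |b k * r ^ k| = |b k| * |r| ^ k := by
      rw [abs_mul, abs_pow]
    have hrC : |r| ≤ C := le_trans hr hRC
    have h2 : |r| ^ k ≤ C ^ k := pow_le_pow_left₀ (abs_nonneg r) hrC k
    have hk : k ≤ 6 * m + 5 := by omega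
    have h3 : C ^ k ≤ C ^ (6 * m + 5) := pow_le_pow_right₀ hC1 hk
    have h4 : C ^ (6 * m + 5) = (C ^ 6) ^ m * C ^ 5 := by
      rw [← pow_mul, ← pow_add]
    have h5 : |b k| ≤ 2 ^ m / vimMajorantDenom k := hb k
    have h6 : (2 : ℝ) ^ m / vimMajorantDenom k ≤ 2 ^ m / ((m.factorial : ℕ) : ℝ) := by
      apply div_le_div_of_nonneg_left (by positivity) hfacpos hfac
    calc |b k * r ^ k| = |b k| * |r| ^ k := h1
      _ ≤ (2 ^ m / ((m.factorial : ℕ) : ℝ)) * ((C ^ 6) ^ m * C ^ 5) := by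
          apply mul_le_mul (le_trans h5 h6) (by linarith) (by positivity)
          positivity
      _ = g k := by
          simp only [hg, ← hm]
          rw [mul_pow]
          field_simp
  -- summability of the individual series
  have hsum : ∀ (b : ℕ → ℝ), (∀ k, |b k| ≤ 2 ^ (k / 6) / vimMajorantDenom k) →
      ∀ (r : ℝ), |r| ≤ R → Summable (fun k => |b k * r ^ k|) := by
    intro b hb r hr
    exact Summable.of_nonneg_of_le (fun k => abs_nonneg _) (hterm b hb r hr) hg_summable
  rw [Metric.tendstoUniformlyOn_iff]
  intro ε hε
  -- tail of the majorant tends to zero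
  have htail : Filter.Tendsto (fun n : ℕ => ∑' k, (2 * g (k + (2 * n + 2))))
      Filter.atTop (nhds 0) := by
    have h1 : Filter.Tendsto (fun i : ℕ => ∑' k, (2 * g (k + i))) Filter.atTop (nhds 0) := by
      have := tendsto_sum_nat_add (fun k => 2 * g k)
      simpa using this
    have h2 : Filter.Tendsto (fun n : ℕ => 2 * n + 2) Filter.atTop Filter.atTop := by
      apply Filter.tendsto_atTop_mono (fun n => by omega : ∀ n : ℕ, n ≤ 2 * n + 2)
        Filter.tendsto_id
    exact h1.comp h2
  filter_upwards [(tendsto_order.1 htail).2 ε hε] with n hn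
  rintro ⟨r, t⟩ ⟨hrmem, -⟩
  have hr : |r| ≤ R := abs_le.2 ⟨hrmem.1, hrmem.2⟩
  -- summabilities
  have hsa : Summable (fun k => |a n k * r ^ k|) := hsum (a n) (hbound n) r hr
  have hsα : Summable (fun k => |α k * r ^ k|) := hsum α hαbound r hr
  have hsa' : Summable (fun k => a n k * r ^ k) := hsa.of_abs
  have hsα' : Summable (fun k => α k * r ^ k) := hsα.of_abs
  -- the distance computation
  rw [hψ r t, hψn n r t, dist_eq_norm]
  rw [← mul_sub]
  rw [norm_mul]
  have habs : ‖Complex.exp (Complex.I * t)‖ = 1 := by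
    rw [Complex.norm_exp]
    simp [Complex.mul_re]
  rw [habs, one_mul]
  have hsub : ((∑' k : ℕ, α k * r ^ k : ℝ) : ℂ) - ((∑' k : ℕ, a n k * r ^ k : ℝ) : ℂ)
      = (((∑' k : ℕ, α k * r ^ k) - (∑' k : ℕ, a n k * r ^ k) : ℝ) : ℂ) := by
    push_cast; ring
  rw [hsub, Complex.norm_real]
  -- now a real estimate
  have hdiff : (∑' k : ℕ, α k * r ^ k) - (∑' k : ℕ, a n k * r ^ k)
      = ∑' k : ℕ, (α k * r ^ k - a n k * r ^ k) := (Summable.tsum_sub hsα' hsa').symm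
  rw [hdiff]
  set m := 2 * n + 2 with hmdef
  have hsd : Summable (fun k => α k * r ^ k - a n k * r ^ k) := hsα'.sub hsa'
  have hsd_abs : Summable (fun k => |α k * r ^ k - a n k * r ^ k|) := by
    apply Summable.of_nonneg_of_le (fun k => abs_nonneg _) (fun k => abs_sub _ _)
    exact hsα.add hsa
  have hnorm : ‖∑' k : ℕ, (α k * r ^ k - a n k * r ^ k)‖
      ≤ ∑' k : ℕ, |α k * r ^ k - a n k * r ^ k| := by
    have hsd_norm : Summable (fun k => ‖α k * r ^ k - a n k * r ^ k‖) := by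
      simpa [Real.norm_eq_abs] using hsd_abs
    have h := norm_tsum_le_tsum_norm hsd_norm
    calc ‖∑' (k : ℕ), (α k * r ^ k - a n k * r ^ k)‖
        ≤ ∑' (k : ℕ), ‖α k * r ^ k - a n k * r ^ k‖ := h
      _ = ∑' (k : ℕ), |α k * r ^ k - a n k * r ^ k| := by
          exact tsum_congr fun k => Real.norm_eq_abs _
  refine lt_of_le_of_lt (le_trans hnorm ?_) hn
  -- split off the first m terms (which vanish)
  have hsplit := Summable.sum_add_tsum_nat_add (f := fun k => |α k * r ^ k - a n k * r ^ k|) m hsd_abs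
  have hzero : ∑ k ∈ Finset.range m, |α k * r ^ k - a n k * r ^ k| = 0 := by
    apply Finset.sum_eq_zero
    intro k hk
    rw [Finset.mem_range] at hk
    rw [hairy n k (by omega)]
    simp
  rw [← hsplit, hzero, zero_add]
  have hs1 : Summable (fun j => |α (j + m) * r ^ (j + m) - a n (j + m) * r ^ (j + m)|) :=
    (summable_nat_add_iff (f := fun j => |α j * r ^ j - a n j * r ^ j|) m).2 hsd_abs
  have hs2 : Summable (fun j => 2 * g (j + m)) :=
    (summable_nat_add_iff (f := fun j => 2 * g j) m).2 (hg_summable.mul_left 2)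
  refine Summable.tsum_le_tsum (fun k => ?_) hs1 hs2
  have h1 : |α (k + m) * r ^ (k + m) - a n (k + m) * r ^ (k + m)|
      ≤ |α (k + m) * r ^ (k + m)| + |a n (k + m) * r ^ (k + m)| := abs_sub _ _
  have h2 := hterm α hαbound r hr (k + m)
  have h3 := hterm (a n) (hbound n) r hr (k + m)
  linarith
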